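/- Let α > 2 be fixed and let x > 0. Then F₁(α,x) ≤ F(α,x) ≤ F₂(α,x), where F(α,x) = ∫₀^∞ t^α / (sinh(xt) · (1 + t²)) dt, F₁(α,x) = (2 − 2^{−α}) · Z(α+1) · G(α,x), F₂(α,x) = (2 − 2^{2−α}) · Z(α−1) · G(α,x), G(α,x) = ∫₀^∞ t^α · e^{−xt} / (1 + t²) dt, and Z(s) = Σ_{n=1}^∞ 1/n^s. -/

import Mathlib

open MeasureTheory Filter Real

/-- `Z(s) = Σ_{n=1}^∞ 1/n^s` (the Riemann zeta function for real `s > 1`). -/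
noncomputable def Zfun (s : ℝ) : ℝ :=
  ∑' n : ℕ+, 1 / (n : ℝ) ^ s

/-- `F(α,x) = ∫₀^∞ t^α / (sinh(xt)·(1+t²)) dt`. -/
noncomputable def Ffun (α x : ℝ) : ℝ :=
  ∫ t in Set.Ioi (0:ℝ), t ^ α / (Real.sinh (x * t) * (1 + t ^ 2))

/-- `G(α,x) = ∫₀^∞ t^α·e^{−xt}/(1+t²) dt`. -/
noncomputable def Gfun (α x : ℝ) : ℝ :=
  ∫ t in Set.Ioi (0:ℝ), t ^ α * Real.exp (-(x * t)) / (1 + t ^ 2)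

lemma summable_rpow_neg {s : ℝ} (hs : 1 < s) :
    Summable (fun n : ℕ => (n : ℝ) ^ (-s)) := by
  simp_rw [Real.rpow_neg (Nat.cast_nonneg _)]
  exact Real.summable_nat_rpow_inv.mpr hs

lemma summable_odd_rpow_neg {s : ℝ} (hs : 1 < s) :
    Summable (fun k : ℕ => ((2 * k + 1 : ℕ) : ℝ) ^ (-s)) :=
  (summable_rpow_neg hs).comp_injective (fun a b h => by omega)

lemma Zfun_eq {s : ℝ} (hs : 1 < s) : Zfun s = ∑' n : ℕ, (n : ℝ) ^ (-s) := by
  rw [Zfun]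
  rw [tsum_eq_zero_add' (by
    have := (summable_rpow_neg hs).comp_injective (Nat.succ_injective)
    exact this)]
  rw [Nat.cast_zero, Real.zero_rpow (neg_ne_zero.mpr (by linarith)), zero_add]
  rw [← Equiv.pnatEquivNat.symm.tsum_eq (fun n : ℕ+ => 1 / (n : ℝ) ^ s)]
  congr 1
  ext k
  simp [Equiv.pnatEquivNat, Real.rpow_neg (by positivity : (0:ℝ) ≤ (k:ℝ)+1), one_div]

lemma odd_sum {s : ℝ} (hs : 1 < s) :
    ∑' k : ℕ, ((2 * k + 1 : ℕ) : ℝ) ^ (-s) = (1 - (2:ℝ) ^ (-s)) * Zfun s := by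
  have hf : Summable (fun n : ℕ => (n : ℝ) ^ (-s)) := summable_rpow_neg hs
  have he : Summable (fun k : ℕ => ((2 * k : ℕ) : ℝ) ^ (-s)) :=
    hf.comp_injective (fun a b h => by omega)
  have ho := summable_odd_rpow_neg hs
  have key := tsum_even_add_odd (f := fun n : ℕ => (n : ℝ) ^ (-s)) he ho
  have heven : ∑' k : ℕ, ((2 * k : ℕ) : ℝ) ^ (-s) = (2:ℝ) ^ (-s) * ∑' n : ℕ, (n : ℝ) ^ (-s) := by
    rw [← tsum_mul_left]
    congr 1; ext k
    push_cast
    rw [Real.mul_rpow (by norm_num) (Nat.cast_nonneg _)]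
  rw [heven, ← Zfun_eq hs] at key
  rw [Zfun_eq hs] at key ⊢
  linarith


lemma integrableOn_aux {α b : ℝ} (hα : -1 < α) (hb : 0 < b) {D : ℝ → ℝ}
    (hD : Continuous D) (hD1 : ∀ u, 1 ≤ D u) :
    IntegrableOn (fun u : ℝ => u ^ α * Real.exp (-(b * u)) / D u) (Set.Ioi 0) := by
  have base : IntegrableOn (fun u : ℝ => u ^ α * Real.exp (-(b * u))) (Set.Ioi 0) := by
    have := integrableOn_rpow_mul_exp_neg_mul_rpow hα (one_pos : (0:ℝ) < 1) hb
    simpa [Real.rpow_one, neg_mul] using this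
  refine base.mono' ?_ ?_
  · refine ContinuousOn.aestronglyMeasurable ?_ measurableSet_Ioi
    refine ContinuousOn.div ?_ hD.continuousOn
      (fun u _ => ne_of_gt (lt_of_lt_of_le one_pos (hD1 u)))
    exact (continuousOn_id.rpow_const (fun u hu => Or.inl (ne_of_gt hu))).mul
      (((continuous_const.mul continuous_id).neg.rexp).continuousOn)
  · refine (ae_restrict_mem measurableSet_Ioi).mono (fun u hu => ?_)
    have hu0 : (0:ℝ) < u := hu
    have hD0 : (0:ℝ) < D u := lt_of_lt_of_le one_pos (hD1 u)
    have hnum : 0 ≤ u ^ α * Real.exp (-(b * u)) := by positivity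
    rw [Real.norm_eq_abs, abs_of_nonneg (by positivity)]
    exact div_le_self hnum (hD1 u)

lemma Gfun_nonneg {α x : ℝ} : 0 ≤ Gfun α x := by
  refine setIntegral_nonneg measurableSet_Ioi (fun t ht => ?_)
  have : (0:ℝ) < t := ht
  positivity

lemma G_scale {α x c : ℝ} (hα : 2 < α) (hx : 0 < x) (hc : 1 ≤ c) :
    c ^ (-(α+1)) * Gfun α x ≤ (∫ t in Set.Ioi (0:ℝ), t ^ α * Real.exp (-(c * x * t)) / (1 + t ^ 2)) ∧
    (∫ t in Set.Ioi (0:ℝ), t ^ α * Real.exp (-(c * x * t)) / (1 + t ^ 2)) ≤ c ^ (-(α-1)) * Gfun α x := by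
  have hc0 : (0:ℝ) < c := lt_of_lt_of_le one_pos hc
  set g : ℝ → ℝ := fun u => u ^ α * Real.exp (-(x * u)) / (1 + (u / c) ^ 2) with hg
  have hD1 : ∀ u : ℝ, (1:ℝ) ≤ 1 + (u / c) ^ 2 := fun u => le_add_of_nonneg_right (sq_nonneg _)
  have gint : IntegrableOn g (Set.Ioi 0) :=
    integrableOn_aux (by linarith) hx ((continuous_const.add
      ((continuous_id.div_const c).pow 2))) hD1
  have Gint : IntegrableOn (fun u : ℝ => u ^ α * Real.exp (-(x * u)) / (1 + u ^ 2)) (Set.Ioi 0) :=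
    integrableOn_aux (by linarith) hx (continuous_const.add (continuous_id.pow 2))
      (fun u => le_add_of_nonneg_right (sq_nonneg _))
  -- change of variables
  have key : (∫ t in Set.Ioi (0:ℝ), t ^ α * Real.exp (-(c * x * t)) / (1 + t ^ 2))
      = c ^ (-(α+1)) * ∫ u in Set.Ioi (0:ℝ), g u := by
    have h1 : ∀ t ∈ Set.Ioi (0:ℝ),
        t ^ α * Real.exp (-(c * x * t)) / (1 + t ^ 2) = c ^ (-α) * g (c * t) := by
      intro t ht
      have ht0 : (0:ℝ) < t := ht
      have : (c * t) / c = t := by field_simp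
      simp only [hg, this]
      rw [Real.mul_rpow hc0.le ht0.le]
      rw [Real.rpow_neg hc0.le]
      have hcα : (0:ℝ) < c ^ α := Real.rpow_pos_of_pos hc0 _
      field_simp
    rw [setIntegral_congr_fun measurableSet_Ioi h1, integral_const_mul]
    rw [integral_comp_mul_left_Ioi g 0 hc0, mul_zero]
    simp only [smul_eq_mul]
    rw [← mul_assoc]
    congr 1
    rw [← Real.rpow_neg_one c, ← Real.rpow_add hc0]
    congr 1; ring
  have glow : Gfun α x ≤ ∫ u in Set.Ioi (0:ℝ), g u := by
    rw [Gfun]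
    refine setIntegral_mono_on Gint gint measurableSet_Ioi (fun u hu => ?_)
    have hu0 : (0:ℝ) < u := hu
    have h2 : (u / c) ^ 2 ≤ u ^ 2 := by
      have : 0 ≤ u / c := by positivity
      have huc : u / c ≤ u := div_le_self hu0.le hc
      nlinarith
    have hnum : 0 ≤ u ^ α * Real.exp (-(x * u)) := by positivity
    apply div_le_div_of_nonneg_left hnum (by positivity)
    linarith
  have ghigh : (∫ u in Set.Ioi (0:ℝ), g u) ≤ c ^ 2 * Gfun α x := by
    rw [Gfun, ← integral_const_mul]
    refine setIntegral_mono_on gint (Gint.const_mul _) measurableSet_Ioi (fun u hu => ?_)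
    have hu0 : (0:ℝ) < u := hu
    have hnum : 0 ≤ u ^ α * Real.exp (-(x * u)) := by positivity
    have hkey : (1 + u ^ 2) / c ^ 2 ≤ 1 + (u / c) ^ 2 := by
      rw [div_pow, add_div]
      have : (1:ℝ) / c ^ 2 ≤ 1 := by
        rw [div_le_one (by positivity)]; nlinarith
      linarith
    have := div_le_div_of_nonneg_left hnum (by positivity : (0:ℝ) < (1 + u ^ 2) / c ^ 2) hkey
    calc g u ≤ (u ^ α * Real.exp (-(x * u))) / ((1 + u ^ 2) / c ^ 2) := this
    _ = c ^ 2 * (u ^ α * Real.exp (-(x * u)) / (1 + u ^ 2)) := by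
        field_simp
  constructor
  · rw [key]
    exact mul_le_mul_of_nonneg_left glow (Real.rpow_nonneg hc0.le _)
  · rw [key]
    calc c ^ (-(α+1)) * ∫ u in Set.Ioi (0:ℝ), g u
        ≤ c ^ (-(α+1)) * (c ^ 2 * Gfun α x) :=
          mul_le_mul_of_nonneg_left ghigh (Real.rpow_nonneg hc0.le _)
    _ = c ^ (-(α-1)) * Gfun α x := by
        rw [← mul_assoc, ← Real.rpow_natCast c 2, ← Real.rpow_add hc0]
        congr 2
        push_cast; ring

lemma alg_aux (A B E : ℝ) (hB : 0 < B) (hE0 : 0 < E) (hE1 : E < 1) :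
    A / ((E⁻¹ - E) / 2 * B) = 2 * A / B * (E * (1 - E ^ 2)⁻¹) := by
  have h2 : (0:ℝ) < 1 - E ^ 2 := by nlinarith
  have h3 : E⁻¹ - E = (1 - E ^ 2) / E := by field_simp
  rw [h3, div_div, div_mul_eq_mul_div, div_div_eq_mul_div, mul_comm (2*A/B)]
  field_simp

lemma sinh_series {α x t : ℝ} (hx : 0 < x) (ht : 0 < t) :
    t ^ α / (Real.sinh (x * t) * (1 + t ^ 2)) =
    ∑' k : ℕ, 2 * (t ^ α * Real.exp (-(((2 * k + 1 : ℕ) : ℝ) * x * t)) / (1 + t ^ 2)) := by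
  set u := x * t with hu
  have hu0 : 0 < u := mul_pos hx ht
  set E := Real.exp (-u) with hE
  have hE0 : 0 < E := Real.exp_pos _
  have hE1 : E < 1 := Real.exp_lt_one_iff.mpr (by linarith)
  have hterm : ∀ k : ℕ, Real.exp (-(((2 * k + 1 : ℕ) : ℝ) * x * t)) = E * (E ^ 2) ^ k := by
    intro k
    rw [hE, ← Real.exp_nat_mul, ← Real.exp_nat_mul, ← Real.exp_add]
    congr 1
    push_cast
    rw [hu]; ring
  have hsum : ∑' k : ℕ, 2 * (t ^ α * Real.exp (-(((2 * k + 1 : ℕ) : ℝ) * x * t)) / (1 + t ^ 2))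
      = (2 * t ^ α / (1 + t ^ 2)) * (E * (1 - E ^ 2)⁻¹) := by
    have : ∀ k : ℕ, 2 * (t ^ α * Real.exp (-(((2 * k + 1 : ℕ) : ℝ) * x * t)) / (1 + t ^ 2))
        = ((2 * t ^ α / (1 + t ^ 2)) * E) * (E ^ 2) ^ k := by
      intro k; rw [hterm k]; ring
    rw [tsum_congr this, tsum_mul_left, tsum_geometric_of_lt_one (by positivity) (by nlinarith)]
    ring
  rw [hsum, Real.sinh_eq]
  have he : Real.exp (x * t) = E⁻¹ := by rw [hE, ← Real.exp_neg, neg_neg]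
  have hEE : 1 - E ^ 2 > 0 := by nlinarith
  rw [he, hE]
  have h1t : (0:ℝ) < 1 + t ^ 2 := by positivity
  exact alg_aux _ _ _ h1t hE0 hE1

theorem stmt_16 (α x : ℝ) (hα : 2 < α) (hx : 0 < x) :
    (2 - (2 : ℝ) ^ (-α)) * Zfun (α + 1) * Gfun α x ≤ Ffun α x ∧
    Ffun α x ≤ (2 - (2 : ℝ) ^ (2 - α)) * Zfun (α - 1) * Gfun α x := by
  set c : ℕ → ℝ := fun k => ((2 * k + 1 : ℕ) : ℝ) with hcdef
  have hc1 : ∀ k, (1:ℝ) ≤ c k := fun k => by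
    simp only [hcdef]; exact_mod_cast Nat.one_le_iff_ne_zero.mpr (by omega)
  have hc0 : ∀ k, (0:ℝ) < c k := fun k => lt_of_lt_of_le one_pos (hc1 k)
  set F : ℕ → ℝ → ℝ := fun k t => 2 * (t ^ α * Real.exp (-(c k * x * t)) / (1 + t ^ 2))
    with hFdef
  set H : ℕ → ℝ := fun k => ∫ t in Set.Ioi (0:ℝ), t ^ α * Real.exp (-(c k * x * t)) / (1 + t ^ 2)
    with hHdef
  have hscale := fun k => G_scale (α := α) (x := x) (c := c k) hα hx (hc1 k)
  have hFint : ∀ k, IntegrableOn (F k) (Set.Ioi 0) := by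
    intro k
    have : IntegrableOn (fun t : ℝ => t ^ α * Real.exp (-(c k * x * t)) / (1 + t ^ 2))
        (Set.Ioi 0) := by
      have := integrableOn_aux (α := α) (b := c k * x) (by linarith) (by positivity)
        (continuous_const.add (continuous_id.pow 2))
        (fun u => le_add_of_nonneg_right (sq_nonneg _))
      refine this.congr_fun (fun t _ => by simp only [id_eq, mul_assoc, Pi.add_apply, Pi.pow_apply]) measurableSet_Ioi
    exact this.const_mul 2
  have hFeqH : ∀ k, (∫ t in Set.Ioi (0:ℝ), F k t) = 2 * H k := by
    intro k
    simp only [hFdef, hHdef]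
    rw [integral_const_mul]
  have hFnorm : ∀ k, (∫ t in Set.Ioi (0:ℝ), ‖F k t‖) = 2 * H k := by
    intro k
    rw [← hFeqH k]
    refine integral_congr_ae (((ae_restrict_mem measurableSet_Ioi)).mono (fun t ht => ?_))
    have ht0 : (0:ℝ) < t := ht
    show ‖F k t‖ = F k t
    simp only [hFdef]
    rw [Real.norm_eq_abs, abs_of_nonneg (by positivity)]
  have hHnonneg : ∀ k, 0 ≤ H k := fun k =>
    setIntegral_nonneg measurableSet_Ioi (fun t ht => by
      have : (0:ℝ) < t := ht; positivity)
  have hGnn : 0 ≤ Gfun α x := Gfun_nonneg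
  -- summability of upper bounds
  have hsummo : Summable (fun k : ℕ => (c k) ^ (-(α - 1))) :=
    summable_odd_rpow_neg (by linarith)
  have hsummo' : Summable (fun k : ℕ => (c k) ^ (-(α + 1))) :=
    summable_odd_rpow_neg (by linarith)
  have hHsum : Summable (fun k => 2 * H k) := by
    refine Summable.of_nonneg_of_le (fun k => by have := hHnonneg k; linarith)
      (fun k => ?_) ((hsummo.mul_right (Gfun α x)).mul_left 2)
    have := (hscale k).2
    calc 2 * H k ≤ 2 * ((c k) ^ (-(α-1)) * Gfun α x) := by linarith
    _ = 2 * ((c k) ^ (-(α-1)) * Gfun α x) := rfl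
  have hswap : Ffun α x = ∑' k, 2 * H k := by
    rw [Ffun]
    rw [setIntegral_congr_fun measurableSet_Ioi
      (fun t ht => sinh_series (α := α) hx (Set.mem_Ioi.mp ht))]
    rw [← integral_tsum_of_summable_integral_norm hFint (by
      simp_rw [hFnorm]; exact hHsum)]
    exact tsum_congr (fun k => hFeqH k)
  -- lower bound
  have hlow : ∑' k, 2 * ((c k) ^ (-(α+1)) * Gfun α x) ≤ ∑' k, 2 * H k := by
    refine Summable.tsum_le_tsum (fun k => ?_) ((hsummo'.mul_right (Gfun α x)).mul_left 2) hHsum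
    have := (hscale k).1
    linarith
  have hhigh : ∑' k, 2 * H k ≤ ∑' k, 2 * ((c k) ^ (-(α-1)) * Gfun α x) := by
    refine Summable.tsum_le_tsum (fun k => ?_) hHsum ((hsummo.mul_right (Gfun α x)).mul_left 2)
    have := (hscale k).2
    linarith
  have hev : ∀ s : ℝ, 1 < s → ∑' k, 2 * ((c k) ^ (-s) * Gfun α x)
      = (2 * (1 - (2:ℝ) ^ (-s))) * Zfun s * Gfun α x := by
    intro s hs
    rw [tsum_mul_left, tsum_mul_right, odd_sum hs]
    ring
  constructor
  · rw [hswap]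
    refine le_trans (le_of_eq ?_) hlow
    rw [hev (α+1) (by linarith)]
    have h2 : 2 * (1 - (2:ℝ) ^ (-(α+1))) = 2 - (2:ℝ) ^ (-α) := by
      have : (2:ℝ) ^ (1:ℝ) * (2:ℝ) ^ (-(α+1)) = (2:ℝ) ^ (-α) := by
        rw [← Real.rpow_add two_pos]; congr 1; ring
      rw [Real.rpow_one] at this
      linarith
    rw [h2]
  · rw [hswap]
    refine le_trans hhigh (le_of_eq ?_)
    rw [hev (α-1) (by linarith)]
    have h2 : 2 * (1 - (2:ℝ) ^ (-(α-1))) = 2 - (2:ℝ) ^ (2-α) := by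
      have : (2:ℝ) ^ (1:ℝ) * (2:ℝ) ^ (-(α-1)) = (2:ℝ) ^ (2-α) := by
        rw [← Real.rpow_add two_pos]; congr 1; ring
      rw [Real.rpow_one] at this
      linarith
    rw [h2]
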